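/- arXiv:2203.11974 — 5 statements merged into one kernel-verified Lean document; each statement's English description precedes it below -/
import Mathlib

section
/- Let a, b, c be real numbers with a > 1, b > 1, c > 1 and log b / log a irrational. Then for every δ > 0 there exist natural numbers k, ℓ such that |a^k * b^(-ℓ) - c| < δ. -/
open Metric Finset

noncomputable section

abbrev Vec (d : ℕ) := EuclideanSpace ℝ (Fin d)

def ChainIn {X : Type*} [MetricSpace X] (Φ : ℝ → X → X) (S : Set X)
    (ε T : ℝ) (x y : X) : Prop :=
  ∃ (n : ℕ) (u : ℕ → X) (t : ℕ → ℝ), 1 ≤ n ∧ u 0 = x ∧ u n = y ∧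
    (∀ i ≤ n, u i ∈ S) ∧ (∀ i < n, T ≤ t i) ∧
    ∀ i < n, dist (Φ (t i) (u i)) (u (i + 1)) < ε

def OmegaIn {X : Type*} [MetricSpace X] (Φ : ℝ → X → X) (S : Set X) (x : X) : Set X :=
  {y | ∀ ε T : ℝ, 0 < ε → 0 < T → ChainIn Φ S ε T x y}

def ChainTransOn {X : Type*} [MetricSpace X] (Φ : ℝ → X → X) (S A : Set X) : Prop :=
  ∀ x ∈ A, ∀ y ∈ A, y ∈ OmegaIn Φ S x

structure IsFlow {X : Type*} [MetricSpace X] (Φ : ℝ → X → X) : Prop where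
  cont : Continuous fun q : ℝ × X => Φ q.1 q.2
  init : ∀ x, Φ 0 x = x
  comp : ∀ s t x, Φ (s + t) x = Φ s (Φ t x)

def sphere1 (d : ℕ) : Set (Vec d) := {v | ‖v‖ = 1}

structure IsLinearFlow (d : ℕ) (Φ : ℝ → Vec d → Vec d) : Prop where
  cont : Continuous fun q : ℝ × Vec d => Φ q.1 q.2
  lin : ∀ t, IsLinearMap ℝ (Φ t)
  init : ∀ x, Φ 0 x = x
  comp : ∀ s t x, Φ (s + t) x = Φ s (Φ t x)

def sphFlow {d : ℕ} (Φ : ℝ → Vec d → Vec d) : ℝ → Vec d → Vec d :=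
  fun t v => ‖Φ t v‖⁻¹ • Φ t v

abbrev PVec (d : ℕ) := WithLp 2 (Vec d × ℝ)

def emb {d : ℕ} (v : Vec d) (r : ℝ) : PVec d := (WithLp.equiv 2 (Vec d × ℝ)).symm (v, r)

def piP {d : ℕ} (v : Vec d) : PVec d := ‖emb v 1‖⁻¹ • emb v 1

def extFlow {d : ℕ} (Φ : ℝ → Vec d → Vec d) : ℝ → PVec d → PVec d :=
  fun t p => emb (Φ t ((WithLp.equiv 2 (Vec d × ℝ)) p).1) ((WithLp.equiv 2 (Vec d × ℝ)) p).2

def poinFlow {d : ℕ} (Φ : ℝ → Vec d → Vec d) : ℝ → PVec d → PVec d :=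
  fun t p => ‖extFlow Φ t p‖⁻¹ • extFlow Φ t p

def openHemi (d : ℕ) : Set (PVec d) :=
  {p | ‖p‖ = 1 ∧ 0 < ((WithLp.equiv 2 (Vec d × ℝ)) p).2}

def closedHemi (d : ℕ) : Set (PVec d) :=
  {p | ‖p‖ = 1 ∧ 0 ≤ ((WithLp.equiv 2 (Vec d × ℝ)) p).2}

def matFlow (d : ℕ) (A : Matrix (Fin d) (Fin d) ℝ) : ℝ → Vec d → Vec d :=
  fun t x => (EuclideanSpace.equiv (Fin d) ℝ).symm
    ((NormedSpace.exp (t • A)).mulVec (EuclideanSpace.equiv (Fin d) ℝ x))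

lemma key (ξ t ε : ℝ) (hξ : Irrational ξ) (hξ0 : 0 < ξ) (ht : 0 < t) (hε : 0 < ε) :
    ∃ k l : ℕ, |(k : ℝ) - l * ξ - t| < ε := by
  set ε' := min ε (min t 1) with hε'def
  have hε'0 : 0 < ε' := lt_min hε (lt_min ht one_pos)
  have hε'ε : ε' ≤ ε := min_le_left _ _
  have hε't : ε' ≤ t := le_trans (min_le_right _ _) (min_le_left _ _)
  have hε'1 : ε' ≤ 1 := le_trans (min_le_right _ _) (min_le_right _ _)
  have hdense : Dense ((AddSubgroup.closure {1, ξ} : AddSubgroup ℝ) : Set ℝ) := by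
    rcases AddSubgroup.dense_or_cyclic (AddSubgroup.closure {1, ξ}) with h | ⟨g, hg⟩
    · exact h
    · exfalso
      have h1 : (1:ℝ) ∈ AddSubgroup.closure {1, ξ} := AddSubgroup.subset_closure (by simp)
      have h2 : ξ ∈ AddSubgroup.closure {1, ξ} := AddSubgroup.subset_closure (by simp)
      rw [hg, AddSubgroup.mem_closure_singleton] at h1 h2
      obtain ⟨p, hp⟩ := h1
      obtain ⟨q, hq⟩ := h2
      have hp0 : p ≠ 0 := by rintro rfl; simp at hp
      refine hξ ⟨(q : ℚ)/p, ?_⟩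
      rw [zsmul_eq_mul] at hp hq
      have hpR : (p:ℝ) ≠ 0 := Int.cast_ne_zero.mpr hp0
      push_cast
      rw [div_eq_iff hpR, ← hq]
      linear_combination (-(q:ℝ)) * hp
  obtain ⟨g, hgS, hg0, hgε⟩ : ∃ g ∈ (AddSubgroup.closure {1, ξ} : AddSubgroup ℝ),
      0 < g ∧ g < ε' := by
    obtain ⟨x, hxS, hx⟩ := hdense.exists_mem_open isOpen_Ioo
      (Set.nonempty_Ioo.mpr hε'0)
    exact ⟨x, hxS, hx.1, hx.2⟩
  obtain ⟨m, n, hmn⟩ := (AddSubgroup.mem_closure_pair).mp hgS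
  rw [zsmul_eq_mul, zsmul_eq_mul, mul_one] at hmn
  have hgε'' : g < ε' := hgε
  have hn0 : n ≠ 0 := by
    rintro rfl
    rw [Int.cast_zero, zero_mul, add_zero] at hmn
    have hm1 : 1 ≤ m := by
      have : (0:ℝ) < m := hmn ▸ hg0
      exact_mod_cast this
    have : (1:ℝ) ≤ m := by exact_mod_cast hm1
    have : g < 1 := lt_of_lt_of_le hgε hε'1
    linarith [hmn ▸ this]
  rcases lt_or_gt_of_ne hn0 with hneg | hpos
  · -- n < 0 : use j • g directly
    set j : ℕ := ⌈t / g⌉₊ with hjdef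
    have hj1 : t ≤ j * g := by
      rw [← div_le_iff₀ hg0]; exact Nat.le_ceil _
    have hj2 : (j:ℝ) * g < t + g := by
      have h2 : (j:ℝ) < t / g + 1 := Nat.ceil_lt_add_one (le_of_lt (div_pos ht hg0))
      calc (j:ℝ) * g < (t/g + 1) * g := by nlinarith
        _ = t + g := by field_simp
    have hcast : ((j:ℤ) * m : ℝ) = j * g + ((j:ℝ) * (-n)) * ξ := by
      push_cast; rw [← hmn]; ring
    have hlnn : (0:ℝ) ≤ (j:ℝ) * (-n) := by
      have : (0:ℤ) ≤ (j:ℤ) * (-n) := mul_nonneg (Int.natCast_nonneg j) (by omega)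
      exact_mod_cast this
    have hkpos : 0 < (j:ℤ) * m := by
      have : (0:ℝ) < ((j:ℤ) * m : ℝ) := by
        rw [hcast]; nlinarith
      exact_mod_cast this
    refine ⟨((j:ℤ) * m).toNat, j * (-n).toNat, ?_⟩
    have hk : ((((j:ℤ) * m).toNat : ℕ) : ℝ) = ((j:ℤ) * m : ℝ) := by
      exact_mod_cast Int.toNat_of_nonneg hkpos.le
    have hnn : (((-n).toNat : ℕ) : ℝ) = -(n:ℝ) := by
      exact_mod_cast Int.toNat_of_nonneg (by omega : (0:ℤ) ≤ -n)
    have hl : ((j * (-n).toNat : ℕ) : ℝ) = (j:ℝ) * (-n) := by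
      push_cast [hnn]; ring
    rw [hk, hl, hcast]
    have : (j:ℝ) * g + (j:ℝ) * (-n) * ξ - (j:ℝ) * (-n) * ξ - t = j * g - t := by ring
    rw [this, abs_of_nonneg (by linarith)]
    linarith
  · -- n > 0
    set c' : ℕ := ⌈t⌉₊ with hc'def
    have hT : t ≤ (c' : ℝ) := Nat.le_ceil _
    set T : ℝ := (c':ℝ) - t with hTdef
    have hT0 : 0 ≤ T := by simp [hTdef]; linarith
    set j : ℕ := ⌈T / g⌉₊ with hjdef
    have hj1 : T ≤ j * g := by
      rw [← div_le_iff₀ hg0]; exact Nat.le_ceil _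
    have hj2 : (j:ℝ) * g < T + g := by
      have h2 : (j:ℝ) < T / g + 1 := Nat.ceil_lt_add_one (div_nonneg hT0 hg0.le)
      calc (j:ℝ) * g < (T/g + 1) * g := by nlinarith
        _ = T + g := by field_simp
    have hcast : (((c':ℤ) - (j:ℤ) * m : ℤ) : ℝ) = ((c':ℝ) - j * g) + ((j:ℝ) * n) * ξ := by
      push_cast; rw [← hmn]; ring
    have hv1 : t - g < (c':ℝ) - j * g := by linarith
    have hv2 : (c':ℝ) - j * g ≤ t := by linarith
    have hlnn : (0:ℝ) ≤ (j:ℝ) * n := by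
      have : (0:ℤ) ≤ (j:ℤ) * n := mul_nonneg (Int.natCast_nonneg j) (by omega)
      exact_mod_cast this
    have hkpos : 0 < (c':ℤ) - (j:ℤ) * m := by
      have : (0:ℝ) < (((c':ℤ) - (j:ℤ) * m : ℤ) : ℝ) := by
        rw [hcast]; nlinarith
      exact_mod_cast this
    refine ⟨((c':ℤ) - (j:ℤ) * m).toNat, j * n.toNat, ?_⟩
    have hk : ((((c':ℤ) - (j:ℤ) * m).toNat : ℕ) : ℝ) = (((c':ℤ) - (j:ℤ) * m : ℤ) : ℝ) := by
      exact_mod_cast Int.toNat_of_nonneg hkpos.le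
    have hnn : ((n.toNat : ℕ) : ℝ) = (n:ℝ) := by
      exact_mod_cast Int.toNat_of_nonneg (by omega : (0:ℤ) ≤ n)
    have hl : ((j * n.toNat : ℕ) : ℝ) = (j:ℝ) * n := by
      push_cast [hnn]; ring
    rw [hk, hl, hcast]
    have heq : (c':ℝ) - j * g + (j:ℝ) * n * ξ - (j:ℝ) * n * ξ - t = ((c':ℝ) - j * g) - t := by ring
    rw [heq, abs_sub_lt_iff]
    constructor <;> linarith

theorem stmt0 (a b c : ℝ) (ha : 1 < a) (hb : 1 < b) (hc : 1 < c)
    (hirr : Irrational (Real.log b / Real.log a)) :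
    ∀ δ : ℝ, 0 < δ → ∃ k l : ℕ, |a ^ k * b ^ (-(l : ℤ)) - c| < δ := by
  intro δ hδ
  have hla : 0 < Real.log a := Real.log_pos ha
  have hlb : 0 < Real.log b := Real.log_pos hb
  have hlc : 0 < Real.log c := Real.log_pos hc
  -- continuity of exp at log c
  obtain ⟨ε, hε0, hε⟩ := Metric.continuousAt_iff.mp (Real.continuous_exp.continuousAt (x := Real.log c)) δ hδ
  obtain ⟨k, l, hkl⟩ := key (Real.log b / Real.log a) (Real.log c / Real.log a)
    (ε / Real.log a) hirr (div_pos hlb hla) (div_pos hlc hla) (div_pos hε0 hla)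
  refine ⟨k, l, ?_⟩
  have hval : a ^ k * b ^ (-(l:ℤ)) = Real.exp ((k:ℝ) * Real.log a - (l:ℝ) * Real.log b) := by
    rw [Real.exp_sub, Real.exp_nat_mul, Real.exp_nat_mul, Real.exp_log (by linarith : (0:ℝ) < a),
      Real.exp_log (by linarith : (0:ℝ) < b), zpow_neg, zpow_natCast, div_eq_mul_inv]
  have hdist : |(k:ℝ) * Real.log a - (l:ℝ) * Real.log b - Real.log c| < ε := by
    have e : (k:ℝ) * Real.log a - (l:ℝ) * Real.log b - Real.log c
        = Real.log a * ((k:ℝ) - (l:ℝ) * (Real.log b / Real.log a) - Real.log c / Real.log a) := by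
      field_simp
    rw [e, abs_mul, abs_of_pos hla]
    calc Real.log a * |(k:ℝ) - (l:ℝ) * (Real.log b / Real.log a) - Real.log c / Real.log a|
        < Real.log a * (ε / Real.log a) := mul_lt_mul_of_pos_left hkl hla
      _ = ε := by field_simp
  have := hε (by rwa [Real.dist_eq])
  rw [Real.dist_eq, Real.exp_log (by linarith)] at this
  rwa [hval]
end
end

section
/- Let Φ be a flow on the unit sphere S^{d-1} ⊂ ℝ^d commuting with the antipodal map, and let p: S^{d-1} → ℝP^{d-1} be the quotient projection, with induced flow on ℝP^{d-1}. If for v, w ∈ S^{d-1} the point p(w) lies in the chain limit set Ω(p(v)) of the projectivized flow, then w ∈ Ω(v) or -w ∈ Ω(v) for the flow on the sphere. -/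
open Metric Finset

noncomputable section

structure IsProjQuot {P : Type*} [MetricSpace P] (d : ℕ) (p : Vec d → P)
    (Φ : ℝ → Vec d → Vec d) (Ψ : ℝ → P → P) : Prop where
  surj : ∀ q : P, ∃ v ∈ sphere1 d, p v = q
  fib : ∀ v ∈ sphere1 d, ∀ w ∈ sphere1 d, (p v = p w ↔ v = w ∨ v = -w)
  dist_eq : ∀ v ∈ sphere1 d, ∀ w ∈ sphere1 d,
    dist (p v) (p w) = min (dist v w) (dist v (-w))
  conj : ∀ t : ℝ, ∀ v ∈ sphere1 d, Ψ t (p v) = p (Φ t v)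

lemma chain_mono {X : Type*} [MetricSpace X] {Φ : ℝ → X → X} {S : Set X}
    {ε ε' T T' : ℝ} {x y : X} (h : ChainIn Φ S ε' T' x y)
    (hε : ε' ≤ ε) (hT : T ≤ T') : ChainIn Φ S ε T x y := by
  obtain ⟨n, u, t, hn, h0, hl, hs, ht, hd⟩ := h
  exact ⟨n, u, t, hn, h0, hl, hs, fun i hi => le_trans hT (ht i hi),
    fun i hi => lt_of_lt_of_le (hd i hi) hε⟩

theorem stmt2 {d : ℕ} {P : Type*} [MetricSpace P] (p : Vec d → P)
    (Φ : ℝ → Vec d → Vec d) (Ψ : ℝ → P → P)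
    (hΦ : IsFlow Φ) (hΨ : IsFlow Ψ)
    (hsph : ∀ t : ℝ, ∀ v ∈ sphere1 d, Φ t v ∈ sphere1 d)
    (hneg : ∀ (t : ℝ) (x : Vec d), Φ t (-x) = -Φ t x)
    (hq : IsProjQuot d p Φ Ψ)
    (v w : Vec d) (hv : v ∈ sphere1 d) (hw : w ∈ sphere1 d)
    (h : p w ∈ OmegaIn Ψ Set.univ (p v)) :
    w ∈ OmegaIn Φ (sphere1 d) v ∨ -w ∈ OmegaIn Φ (sphere1 d) v := by
  classical
  have hnegsph : ∀ x ∈ sphere1 d, -x ∈ sphere1 d := by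
    intro x hx; show ‖-x‖ = 1; rw [norm_neg]; exact hx
  have hpneg : ∀ x ∈ sphere1 d, p (-x) = p x := by
    intro x hx
    exact (hq.fib _ (hnegsph x hx) _ hx).2 (Or.inr rfl)
  have key : ∀ ε T : ℝ, 0 < ε → 0 < T →
      ChainIn Φ (sphere1 d) ε T v w ∨ ChainIn Φ (sphere1 d) ε T v (-w) := by
    intro ε T hε hT
    obtain ⟨n, u, t, hn, h0, hlast, -, ht, hd⟩ := h ε T hε hT
    choose z hz hpz using fun i => hq.surj (u i)
    let σ : ℕ → Vec d := fun i => Nat.rec v (fun i prev =>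
      if dist (Φ (t i) prev) (z (i+1)) < ε then z (i+1) else -(z (i+1))) i
    have hσ0 : σ 0 = v := rfl
    have hσsucc : ∀ i, σ (i+1) = if dist (Φ (t i) (σ i)) (z (i+1)) < ε
        then z (i+1) else -(z (i+1)) := fun i => rfl
    have hσsph : ∀ i, σ i ∈ sphere1 d := by
      intro i
      induction i with
      | zero => exact hv
      | succ i ih =>
        rw [hσsucc i]
        by_cases hc : dist (Φ (t i) (σ i)) (z (i+1)) < ε
        · rw [if_pos hc]; exact hz _
        · rw [if_neg hc]; exact hnegsph _ (hz _)
    have hσp : ∀ i, p (σ i) = u i := by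
      intro i
      cases i with
      | zero => rw [hσ0, h0]
      | succ i =>
        rw [hσsucc i]
        by_cases hc : dist (Φ (t i) (σ i)) (z (i+1)) < ε
        · rw [if_pos hc]; exact hpz _
        · rw [if_neg hc, hpneg _ (hz _)]; exact hpz _
    have hstep : ∀ i < n, dist (Φ (t i) (σ i)) (σ (i + 1)) < ε := by
      intro i hi
      have h2 := hd i hi
      rw [← hσp i, hq.conj _ _ (hσsph i), ← hpz (i+1),
        hq.dist_eq _ (hsph _ _ (hσsph i)) _ (hz _)] at h2
      rw [hσsucc i]
      by_cases hc : dist (Φ (t i) (σ i)) (z (i+1)) < ε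
      · rw [if_pos hc]; exact hc
      · rw [if_neg hc]
        rcases min_lt_iff.mp h2 with h3 | h3
        · exact absurd h3 hc
        · exact h3
    have hpn : p (σ n) = p w := by rw [hσp, hlast]
    rcases (hq.fib _ (hσsph n) _ hw).1 hpn with h1 | h1
    · exact Or.inl ⟨n, σ, t, hn, hσ0, h1, fun i _ => hσsph i, ht, hstep⟩
    · exact Or.inr ⟨n, σ, t, hn, hσ0, h1, fun i _ => hσsph i, ht, hstep⟩
  by_cases hw1 : w ∈ OmegaIn Φ (sphere1 d) v
  · exact Or.inl hw1
  · right
    simp only [OmegaIn, Set.mem_setOf_eq] at hw1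
    push_neg at hw1
    obtain ⟨ε₁, T₁, hε₁, hT₁, hnc⟩ := hw1
    intro ε T hε hT
    have hε' : 0 < min ε ε₁ := lt_min hε hε₁
    have hT' : 0 < max T T₁ := lt_of_lt_of_le hT (le_max_left _ _)
    rcases key _ _ hε' hT' with hc | hc
    · exact absurd (chain_mono hc (min_le_right _ _) (le_max_right _ _)) hnc
    · exact chain_mono hc (min_le_left _ _) (le_max_left _ _)
end
end

section
/- Let Φ be a flow on S^{d-1} commuting with the antipodal map, and let M be a chain recurrent component of the induced flow on ℝP^{d-1}. Suppose there exists v₀ ∈ S^{d-1} with p(v₀) ∈ M and -v₀ ∈ Ω(v₀) for the flow on the sphere. Then the set {v ∈ S^{d-1} : p(v) ∈ M} is chain transitive for the flow on the sphere. -/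
open Metric Finset

noncomputable section

/-- A chain recurrent component: a maximal chain transitive set. -/
def IsChainRecComp {X : Type*} [MetricSpace X] (Ψ : ℝ → X → X) (M : Set X) : Prop :=
  ChainTransOn Ψ Set.univ M ∧ ∀ S : Set X, ChainTransOn Ψ Set.univ S → M ⊆ S → S = M

lemma chain_concat {X : Type*} [MetricSpace X] {Φ : ℝ → X → X} {S : Set X}
    {ε T : ℝ} {x y z : X} (h1 : ChainIn Φ S ε T x y) (h2 : ChainIn Φ S ε T y z) :
    ChainIn Φ S ε T x z := by
  obtain ⟨n, u, t, hn, hu0, hun, hS, hT, hj⟩ := h1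
  obtain ⟨m, v, s, hm, hv0, hvm, hS', hT', hj'⟩ := h2
  refine ⟨n + m, fun i => if i < n then u i else v (i - n),
    fun i => if i < n then t i else s (i - n), by omega, ?_, ?_, ?_, ?_, ?_⟩
  · simp only [if_pos (by omega : 0 < n)]; exact hu0
  · have : ¬ n + m < n := by omega
    simp only [if_neg this, Nat.add_sub_cancel_left]; exact hvm
  · intro i hi
    by_cases h : i < n
    · simp only [if_pos h]; exact hS i (le_of_lt h)
    · simp only [if_neg h]; exact hS' (i - n) (by omega)
  · intro i hi
    by_cases h : i < n
    · simp only [if_pos h]; exact hT i h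
    · simp only [if_neg h]; exact hT' (i - n) (by omega)
  · intro i hi
    by_cases h : i < n
    · by_cases h' : i + 1 < n
      · simp only [if_pos h, if_pos h']; exact hj i h
      · have hin : i + 1 = n := by omega
        simp only [if_pos h, if_neg h']
        have : v (i + 1 - n) = u (i + 1) := by
          rw [hin]; simp [hv0, ← hun]
        rw [this]; exact hj i h
    · have h' : ¬ i + 1 < n := by omega
      simp only [if_neg h, if_neg h']
      have : i + 1 - n = (i - n) + 1 := by omega
      rw [this]; exact hj' (i - n) (by omega)

lemma chain_neg {d : ℕ} {Φ : ℝ → Vec d → Vec d}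
    (hneg : ∀ (t : ℝ) (x : Vec d), Φ t (-x) = -Φ t x)
    {ε T : ℝ} {x y : Vec d} (h : ChainIn Φ (sphere1 d) ε T x y) :
    ChainIn Φ (sphere1 d) ε T (-x) (-y) := by
  obtain ⟨n, u, t, hn, hu0, hun, hS, hT, hj⟩ := h
  refine ⟨n, fun i => -u i, t, hn, by simp [hu0], by simp [hun], ?_, hT, ?_⟩
  · intro i hi
    have := hS i hi
    simpa [sphere1] using this
  · intro i hi
    rw [hneg]
    simpa [dist_neg_neg] using hj i hi

lemma lift_step {d : ℕ} {P : Type*} [MetricSpace P] {p : Vec d → P}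
    {Φ : ℝ → Vec d → Vec d} {Ψ : ℝ → P → P}
    (hsph : ∀ t : ℝ, ∀ v ∈ sphere1 d, Φ t v ∈ sphere1 d)
    (hq : IsProjQuot d p Φ Ψ)
    {ε t : ℝ} {x : Vec d} {q : P} (hx : x ∈ sphere1 d)
    (hd : dist (Ψ t (p x)) q < ε) :
    ∃ w ∈ sphere1 d, p w = q ∧ dist (Φ t x) w < ε := by
  obtain ⟨w', hw', hpw'⟩ := hq.surj q
  have hΦx : Φ t x ∈ sphere1 d := hsph t x hx
  rw [hq.conj t x hx, ← hpw', hq.dist_eq _ hΦx _ hw'] at hd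
  rcases min_lt_iff.mp hd with h | h
  · exact ⟨w', hw', hpw', h⟩
  · refine ⟨-w', by simpa [sphere1] using hw', ?_, h⟩
    rw [← hpw']
    exact (hq.fib (-w') (by simpa [sphere1] using hw') w' hw').mpr (Or.inr rfl)

lemma single_chain {d : ℕ} {Φ : ℝ → Vec d → Vec d} {ε T t : ℝ} {x w : Vec d}
    (hx : x ∈ sphere1 d) (hw : w ∈ sphere1 d) (hT : T ≤ t)
    (hd : dist (Φ t x) w < ε) : ChainIn Φ (sphere1 d) ε T x w := by
  refine ⟨1, fun i => if i = 0 then x else w, fun _ => t, le_refl 1, by simp, by simp, ?_, ?_, ?_⟩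
  · intro i hi
    by_cases h : i = 0
    · simp [h, hx]
    · simp [h, hw]
  · intro i hi; exact hT
  · intro i hi
    have : i = 0 := by omega
    simp [this, hd]

lemma lift_chain {d : ℕ} {P : Type*} [MetricSpace P] {p : Vec d → P}
    {Φ : ℝ → Vec d → Vec d} {Ψ : ℝ → P → P}
    (hsph : ∀ t : ℝ, ∀ v ∈ sphere1 d, Φ t v ∈ sphere1 d)
    (hq : IsProjQuot d p Φ Ψ) {ε T : ℝ} :
    ∀ n, 1 ≤ n → ∀ (u : ℕ → P) (t : ℕ → ℝ) (x : Vec d),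
    x ∈ sphere1 d → p x = u 0 → (∀ i < n, T ≤ t i) →
    (∀ i < n, dist (Ψ (t i) (u i)) (u (i + 1)) < ε) →
    ∃ w ∈ sphere1 d, p w = u n ∧ ChainIn Φ (sphere1 d) ε T x w := by
  intro n hn
  induction n, hn using Nat.le_induction with
  | base =>
    intro u t x hx hpx hT hj
    have hd : dist (Ψ (t 0) (p x)) (u 1) < ε := by
      rw [hpx]; exact hj 0 one_pos
    obtain ⟨w, hw, hpw, hdw⟩ := lift_step hsph hq hx hd
    exact ⟨w, hw, hpw, single_chain hx hw (hT 0 one_pos) hdw⟩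
  | succ n hn ih =>
    intro u t x hx hpx hT hj
    obtain ⟨w, hw, hpw, hcw⟩ := ih u t x hx hpx
      (fun i hi => hT i (by omega)) (fun i hi => hj i (by omega))
    have hd : dist (Ψ (t n) (p w)) (u (n + 1)) < ε := by
      rw [hpw]; exact hj n (by omega)
    obtain ⟨w', hw', hpw', hdw'⟩ := lift_step hsph hq hw hd
    exact ⟨w', hw', hpw',
      chain_concat hcw (single_chain hw hw' (hT n (by omega)) hdw')⟩

theorem stmt3 {d : ℕ} {P : Type*} [MetricSpace P] (p : Vec d → P)
    (Φ : ℝ → Vec d → Vec d) (Ψ : ℝ → P → P)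
    (hΦ : IsFlow Φ) (hΨ : IsFlow Ψ)
    (hsph : ∀ t : ℝ, ∀ v ∈ sphere1 d, Φ t v ∈ sphere1 d)
    (hneg : ∀ (t : ℝ) (x : Vec d), Φ t (-x) = -Φ t x)
    (hq : IsProjQuot d p Φ Ψ)
    (M : Set P) (hM : IsChainRecComp Ψ M)
    (v₀ : Vec d) (hv₀ : v₀ ∈ sphere1 d) (hpv₀ : p v₀ ∈ M)
    (hrec : -v₀ ∈ OmegaIn Φ (sphere1 d) v₀) :
    ChainTransOn Φ (sphere1 d) {v | v ∈ sphere1 d ∧ p v ∈ M} := by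
  rintro x ⟨hx1, hx2⟩ y ⟨hy1, hy2⟩ ε T hε hT
  -- chain v₀ → -v₀ on the sphere
  have hvv : ChainIn Φ (sphere1 d) ε T v₀ (-v₀) := hrec ε T hε hT
  -- chain -v₀ → v₀
  have hvv' : ChainIn Φ (sphere1 d) ε T (-v₀) v₀ := by
    have := chain_neg hneg hvv
    rwa [neg_neg] at this
  -- chain downstairs from p x to p v₀, lift it
  obtain ⟨n, u, t, hn, hu0, hun, _, hTt, hj⟩ :=
    hM.1 (p x) hx2 (p v₀) hpv₀ ε T hε hT
  obtain ⟨w, hw, hpw, hcw⟩ := lift_chain hsph hq n hn u t x hx1 hu0.symm hTt hj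
  have hxv : ChainIn Φ (sphere1 d) ε T x v₀ := by
    rcases (hq.fib w hw v₀ hv₀).mp (hpw.trans hun) with h | h
    · rwa [h] at hcw
    · rw [h] at hcw
      exact chain_concat hcw hvv'
  -- chain downstairs from p v₀ to p y, lift it starting at v₀
  obtain ⟨m, u', t', hm, hu0', hum', _, hTt', hj'⟩ :=
    hM.1 (p v₀) hpv₀ (p y) hy2 ε T hε hT
  obtain ⟨w', hw', hpw', hcw'⟩ := lift_chain hsph hq m hm u' t' v₀ hv₀ hu0'.symm hTt' hj'
  have hvy : ChainIn Φ (sphere1 d) ε T v₀ y := by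
    rcases (hq.fib w' hw' y hy1).mp (hpw'.trans hum') with h | h
    · rwa [h] at hcw'
    · rw [h] at hcw'
      have : ChainIn Φ (sphere1 d) ε T (-v₀) y := by
        have := chain_neg hneg hcw'
        rwa [neg_neg] at this
      exact chain_concat hvv this
  exact chain_concat hxv hvy
end
end

section
/- Let Φ be a linear flow on ℝ^d with induced flow π_PΦ on the open upper hemisphere of S^d defined by π_PΦ(t, π_P v) = π_P(Φ(t, v)). Given an (ε,T)-chain ζ on S^{d-1} for the normalized flow with lift ŵ = (w_0, ..., w_n) to ℝ^d and any α > 0, the sequence π_P(α w_0), ..., π_P(α w_n) with the same times T_i is an (ε,T)-chain for π_PΦ, i.e., the Euclidean distance in ℝ^{d+1} satisfies ‖π_PΦ(T_i, π_P(α w_i)) - π_P(α w_{i+1})‖ ≤ ‖SΦ(T_i, v_i) - v_{i+1}‖ < ε for all i. -/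
open Metric Finset

noncomputable section

lemma emb_norm {d : ℕ} (x : Vec d) (r : ℝ) : ‖emb x r‖ = Real.sqrt (‖x‖^2 + r^2) := by
  rw [WithLp.prod_norm_eq_of_L2]; simp [emb, Real.norm_eq_abs, sq_abs]

lemma emb_sub {d : ℕ} (x y : Vec d) (r s : ℝ) : emb x r - emb y s = emb (x - y) (r - s) := rfl

lemma emb_smul {d : ℕ} (c : ℝ) (x : Vec d) (r : ℝ) : c • emb x r = emb (c • x) (c * r) := rfl

lemma emb_norm_pos {d : ℕ} (x : Vec d) : 0 < ‖emb x 1‖ := by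
  rw [emb_norm]; exact Real.sqrt_pos.2 (by positivity)

lemma key_s8 {d : ℕ} (x y : Vec d) (hx : ‖x‖ = 1) (hy : ‖y‖ = 1) (K : ℝ) (hK : 0 < K) :
    dist (‖emb (K • x) 1‖⁻¹ • emb (K • x) 1) (‖emb (K • y) 1‖⁻¹ • emb (K • y) 1) ≤ dist x y := by
  have hNx : ‖emb (K • x) 1‖ = Real.sqrt (K^2 + 1) := by
    rw [emb_norm, norm_smul, hx, Real.norm_eq_abs]; ring_nf; rw [sq_abs]
  have hNy : ‖emb (K • y) 1‖ = Real.sqrt (K^2 + 1) := by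
    rw [emb_norm, norm_smul, hy, Real.norm_eq_abs]; ring_nf; rw [sq_abs]
  set N := Real.sqrt (K^2 + 1) with hN
  have hNpos : 0 < N := Real.sqrt_pos.2 (by positivity)
  have hN2 : N^2 = K^2 + 1 := Real.sq_sqrt (by positivity)
  have hKN : K ≤ N := by nlinarith
  rw [hNx, hNy, dist_eq_norm, ← smul_sub, norm_smul, emb_sub, sub_self, ← smul_sub,
    emb_norm, norm_smul, Real.norm_eq_abs, Real.norm_eq_abs, abs_inv, abs_of_pos hNpos,
    abs_of_pos hK]
  have h0 : Real.sqrt ((K * ‖x - y‖)^2 + 0^2) = K * ‖x - y‖ := by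
    simp only [add_zero, ne_eq, OfNat.ofNat_ne_zero, not_false_eq_true, zero_pow]
    exact Real.sqrt_sq (by positivity)
  rw [h0, dist_eq_norm, inv_mul_le_iff₀ hNpos]
  nlinarith [norm_nonneg (x - y)]

lemma poin_eval {d : ℕ} (Φ : ℝ → Vec d → Vec d) (hlin : ∀ s, IsLinearMap ℝ (Φ s))
    (s : ℝ) (z : Vec d) :
    poinFlow Φ s (piP z) = ‖emb (Φ s z) 1‖⁻¹ • emb (Φ s z) 1 := by
  have hc : 0 < ‖emb z 1‖ := emb_norm_pos z
  have hq : 0 < ‖emb (Φ s z) 1‖ := emb_norm_pos (Φ s z)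
  have h1 : extFlow Φ s (piP z) = ‖emb z 1‖⁻¹ • emb (Φ s z) 1 := by
    rw [piP, emb_smul]
    show emb (Φ s (‖emb z 1‖⁻¹ • z)) (‖emb z 1‖⁻¹ * 1) = _
    rw [(hlin s).map_smul, emb_smul]
  rw [poinFlow]
  simp only [h1]
  rw [norm_smul, Real.norm_eq_abs, abs_inv, abs_of_pos hc, smul_smul]
  congr 1
  field_simp

theorem stmt8 {d : ℕ} (Φ : ℝ → Vec d → Vec d) (hΦ : IsLinearFlow d Φ)
    (n : ℕ) (v : ℕ → Vec d) (t : ℕ → ℝ) (ε T : ℝ) (hε : 0 < ε) (hT : 0 < T)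
    (hv : ∀ i ≤ n, ‖v i‖ = 1) (ht : ∀ i < n, T ≤ t i)
    (hchain : ∀ i < n, dist (sphFlow Φ (t i) (v i)) (v (i + 1)) < ε)
    (w : ℕ → Vec d)
    (hw : ∀ i, w i = (∏ j ∈ Finset.range i, ‖Φ (t j) (v j)‖) • v i)
    (α : ℝ) (hα : 0 < α) :
    ∀ i < n,
      dist (poinFlow Φ (t i) (piP (α • w i))) (piP (α • w (i + 1)))
        ≤ dist (sphFlow Φ (t i) (v i)) (v (i + 1)) ∧
      dist (poinFlow Φ (t i) (piP (α • w i))) (piP (α • w (i + 1))) < ε := by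
  intro i hi
  have hΦne : ∀ (s : ℝ) (z : Vec d), z ≠ 0 → Φ s z ≠ 0 := by
    intro s z hz h
    apply hz
    have h2 := hΦ.comp (-s) s z
    rw [neg_add_cancel, hΦ.init, h, (hΦ.lin (-s)).map_zero] at h2
    exact h2
  have hnorm_pos : ∀ j ≤ n, 0 < ‖Φ (t j) (v j)‖ := by
    intro j hj
    have hvj : v j ≠ 0 := by
      intro h
      have hx := hv j hj
      rw [h, norm_zero] at hx
      exact one_ne_zero hx.symm
    exact norm_pos_iff.2 (hΦne _ _ hvj)
  set C : ℝ := α * ∏ j ∈ Finset.range i, ‖Φ (t j) (v j)‖ with hCdef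
  have hC : 0 < C := by
    apply mul_pos hα
    apply Finset.prod_pos
    intro j hj
    exact hnorm_pos j (le_of_lt (lt_of_lt_of_le (Finset.mem_range.1 hj) hi.le))
  set K : ℝ := C * ‖Φ (t i) (v i)‖ with hKdef
  have hK : 0 < K := mul_pos hC (hnorm_pos i hi.le)
  have h1 : α • w i = C • v i := by rw [hw, smul_smul]
  have h2 : α • w (i + 1) = K • v (i + 1) := by
    rw [hw, smul_smul]
    congr 1
    rw [hKdef, hCdef, Finset.prod_range_succ, mul_assoc]
  set u : Vec d := sphFlow Φ (t i) (v i) with hudef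
  have hΦpos := hnorm_pos i hi.le
  have hu : ‖u‖ = 1 := by
    rw [hudef, sphFlow, norm_smul, Real.norm_eq_abs, abs_inv, abs_of_pos hΦpos,
      inv_mul_cancel₀ hΦpos.ne']
  have hKu : Φ (t i) (C • v i) = K • u := by
    rw [(hΦ.lin (t i)).map_smul, hudef, sphFlow, smul_smul, hKdef, mul_assoc,
      mul_inv_cancel₀ hΦpos.ne', mul_one]
  have hmain : dist (poinFlow Φ (t i) (piP (α • w i))) (piP (α • w (i + 1)))
      ≤ dist (sphFlow Φ (t i) (v i)) (v (i + 1)) := by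
    rw [h1, h2, poin_eval Φ hΦ.lin, hKu, piP, ← hudef]
    exact key_s8 u (v (i + 1)) hu (hv (i + 1) hi) K hK
  exact ⟨hmain, lt_of_le_of_lt hmain (hchain i hi)⟩
end
end

section
/- Let Φ be a flow on a compact metric space X, and let S ⊂ X be chain transitive. Then for every ε, T > 0 there is a time bound T̄(ε,T) > 0 such that for all x, y ∈ S there is an (ε,T)-chain from x to y with total time at most T̄(ε,T). -/
open Metric Finset

noncomputable section

section Aux

variable {X : Type*} [MetricSpace X] (Φ : ℝ → X → X)

/-- an ε-chain of length `n` with all times in `[T, 2T]`. -/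
def Chain2 (ε T : ℝ) (x y : X) (n : ℕ) : Prop :=
  ∃ (u : ℕ → X) (t : ℕ → ℝ), u 0 = x ∧ u n = y ∧
    (∀ i < n, T ≤ t i ∧ t i ≤ 2 * T) ∧
    ∀ i < n, dist (Φ (t i) (u i)) (u (i + 1)) < ε

lemma chain2_step (hΦ : IsFlow Φ) {ε T t : ℝ} (hε : 0 < ε) (hT : 0 < T)
    (ht : T ≤ t) {x y : X} (hd : dist (Φ t x) y < ε) :
    ∃ n, 1 ≤ n ∧ Chain2 Φ ε T x y n := by
  set m : ℕ := ⌊t / T⌋₊ with hm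
  have htT : (1 : ℝ) ≤ t / T := (one_le_div hT).mpr ht
  have hm1 : 1 ≤ m := Nat.le_floor (by exact_mod_cast htT)
  have hmpos : (0 : ℝ) < m := by exact_mod_cast hm1
  set s : ℝ := t / m with hs
  have hTs : T ≤ s := by
    rw [hs, le_div_iff₀ hmpos]
    have := Nat.floor_le (a := t / T) (by positivity)
    calc T * m ≤ T * (t / T) := by nlinarith
      _ = t := by field_simp
  have hs2T : s ≤ 2 * T := by
    rw [hs, div_le_iff₀ hmpos]
    have h1 : t / T < m + 1 := Nat.lt_floor_add_one _
    have h2 : (m : ℝ) + 1 ≤ 2 * m := by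
      have : (1 : ℝ) ≤ m := by exact_mod_cast hm1
      linarith
    have h3 : t < ((m : ℝ) + 1) * T := by
      rw [div_lt_iff₀ hT] at h1; linarith
    nlinarith
  have hms : (m : ℝ) * s = t := by
    rw [hs]; field_simp
  refine ⟨m, hm1, fun j => if j = m then y else Φ (j * s) x, fun _ => s, ?_, ?_, ?_, ?_⟩
  · beta_reduce
    rw [if_neg (by omega)]
    simp [hΦ.init]
  · simp
  · intro i _; exact ⟨hTs, hs2T⟩
  · intro j hj
    beta_reduce
    rw [if_neg (by omega : ¬ j = m)]
    have hflow : Φ s (Φ (j * s) x) = Φ ((j + 1 : ℕ) * s) x := by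
      rw [← hΦ.comp]
      congr 1
      push_cast; ring
    rw [hflow]
    by_cases hjm : j + 1 = m
    · rw [if_pos hjm, hjm, hms]
      exact hd
    · rw [if_neg hjm]
      simpa using hε

lemma chain2_trans {ε T : ℝ} {x y z : X} {n m : ℕ} (hn : 1 ≤ n)
    (h1 : Chain2 Φ ε T x y n) (h2 : Chain2 Φ ε T y z m) :
    Chain2 Φ ε T x z (n + m) := by
  obtain ⟨u, t, hu0, hun, ht, hd⟩ := h1
  obtain ⟨v, s, hv0, hvm, hs, he⟩ := h2
  refine ⟨fun i => if i < n then u i else v (i - n),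
          fun i => if i < n then t i else s (i - n), ?_, ?_, ?_, ?_⟩
  · beta_reduce; rw [if_pos (by omega : 0 < n)]; exact hu0
  · beta_reduce; rw [if_neg (by omega : ¬ n + m < n)]
    simpa using hvm
  · intro i hi
    beta_reduce
    by_cases h : i < n
    · rw [if_pos h]; exact ht i h
    · rw [if_neg h]; exact hs (i - n) (by omega)
  · intro i hi
    beta_reduce
    by_cases h : i < n
    · by_cases h' : i + 1 < n
      · simp only [if_pos h, if_pos h']; exact hd i h
      · simp only [if_pos h, if_neg h']
        have h2 : i + 1 - n = 0 := by omega
        rw [h2, hv0, ← hun]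
        have hin : i + 1 = n := by omega
        rw [← hin]
        exact hd i h
    · simp only [if_neg h, if_neg (by omega : ¬ i + 1 < n)]
      have h2 : i + 1 - n = (i - n) + 1 := by omega
      rw [h2]
      exact he (i - n) (by omega)

lemma chain2_of_chain (hΦ : IsFlow Φ) {ε T : ℝ} (hε : 0 < ε) (hT : 0 < T)
    {x y : X} {n : ℕ} (u : ℕ → X) (t : ℕ → ℝ) (hn : 1 ≤ n) (hu0 : u 0 = x)
    (hun : u n = y) (hti : ∀ i < n, T ≤ t i)
    (hd : ∀ i < n, dist (Φ (t i) (u i)) (u (i + 1)) < ε) :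
    ∃ m, 1 ≤ m ∧ Chain2 Φ ε T x y m := by
  induction n generalizing y with
  | zero => omega
  | succ k ih =>
    rcases Nat.eq_zero_or_pos k with hk | hk
    · subst hk
      have := hd 0 (by omega)
      rw [hu0, hun] at this  -- careful: u 1 = y
      exact chain2_step Φ hΦ hε hT (hti 0 (by omega)) this
    · obtain ⟨m1, hm1, hc1⟩ := ih (y := u k) hk rfl
        (fun i hi => hti i (by omega)) (fun i hi => hd i (by omega))
      have hstep := hd k (by omega)
      rw [hun] at hstep
      obtain ⟨m2, hm2, hc2⟩ := chain2_step Φ hΦ hε hT (hti k (by omega)) hstep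
      exact ⟨m1 + m2, by omega, chain2_trans Φ hm1 hc1 hc2⟩

lemma chain2_start {ε T : ℝ} (hε : 0 < ε) {p z x : X} {n : ℕ} (hn : 1 ≤ n)
    (h : Chain2 Φ (ε / 2) T p z n)
    (hx : ∀ s, T ≤ s → s ≤ 2 * T → dist (Φ s x) (Φ s p) < ε / 2) :
    Chain2 Φ ε T x z n := by
  obtain ⟨u, t, hu0, hun, ht, hd⟩ := h
  refine ⟨fun i => if i = 0 then x else u i, t, by simp, ?_, ht, ?_⟩
  · beta_reduce; rw [if_neg (by omega : ¬ n = 0)]; exact hun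
  · intro i hi
    beta_reduce
    by_cases h0 : i = 0
    · subst h0
      rw [if_pos rfl, if_neg (by omega : ¬ (0:ℕ) + 1 = 0)]
      obtain ⟨ht1, ht2⟩ := ht 0 hi
      calc dist (Φ (t 0) x) (u 1)
          ≤ dist (Φ (t 0) x) (Φ (t 0) p) + dist (Φ (t 0) p) (u 1) := dist_triangle _ _ _
        _ < ε / 2 + ε / 2 := by
            have := hd 0 hi
            rw [hu0] at this
            exact add_lt_add (hx _ ht1 ht2) this
        _ = ε := by ring
    · rw [if_neg h0, if_neg (by omega : ¬ i + 1 = 0)]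
      exact lt_trans (hd i hi) (by linarith)

lemma chain2_end {ε T : ℝ} (hε : 0 < ε) {p z y : X} {n : ℕ} (hn : 1 ≤ n)
    (h : Chain2 Φ (ε / 2) T z p n) (hy : dist p y < ε / 2) :
    Chain2 Φ ε T z y n := by
  obtain ⟨u, t, hu0, hun, ht, hd⟩ := h
  refine ⟨fun i => if i = n then y else u i, t, ?_, by simp, ht, ?_⟩
  · beta_reduce; rw [if_neg (by omega : ¬ (0:ℕ) = n)]; exact hu0
  · intro i hi
    beta_reduce
    rw [if_neg (by omega : ¬ i = n)]
    by_cases h0 : i + 1 = n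
    · rw [if_pos h0]
      calc dist (Φ (t i) (u i)) y
          ≤ dist (Φ (t i) (u i)) (u n) + dist (u n) y := dist_triangle _ _ _
        _ < ε / 2 + ε / 2 := by
            rw [hun]
            have := hd i hi
            rw [h0, hun] at this
            exact add_lt_add this hy
        _ = ε := by ring
    · rw [if_neg h0]
      exact lt_trans (hd i hi) (by linarith)

end Aux

theorem stmt13 {X : Type*} [MetricSpace X] [CompactSpace X]
    (Φ : ℝ → X → X) (hΦ : IsFlow Φ) (S : Set X)
    (hS : ChainTransOn Φ Set.univ S) :
    ∀ ε T : ℝ, 0 < ε → 0 < T → ∃ Tbar : ℝ, 0 < Tbar ∧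
      ∀ x ∈ S, ∀ y ∈ S,
        ∃ (n : ℕ) (u : ℕ → X) (t : ℕ → ℝ), 1 ≤ n ∧ u 0 = x ∧ u n = y ∧
          (∀ i < n, T ≤ t i) ∧
          (∀ i < n, dist (Φ (t i) (u i)) (u (i + 1)) < ε) ∧
          ∑ i ∈ Finset.range n, t i ≤ Tbar := by
  intro ε T hε hT
  rcases Set.eq_empty_or_nonempty S with hSe | ⟨z, hz⟩
  · exact ⟨1, one_pos, fun x hx => by simp [hSe] at hx⟩
  obtain ⟨δ, hδ0, hδ⟩ : ∃ δ > 0, ∀ x p : X, dist x p < δ → ∀ s, T ≤ s → s ≤ 2*T →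
      dist (Φ s x) (Φ s p) < ε / 2 := by
    have hcomp : IsCompact ((Set.Icc T (2*T)) ×ˢ (Set.univ : Set X)) :=
      isCompact_Icc.prod isCompact_univ
    have hUC : UniformContinuousOn (fun q : ℝ × X => Φ q.1 q.2)
        ((Set.Icc T (2*T)) ×ˢ (Set.univ : Set X)) :=
      hcomp.uniformContinuousOn_of_continuous hΦ.cont.continuousOn
    rw [Metric.uniformContinuousOn_iff] at hUC
    obtain ⟨δ, hδ0, hδ⟩ := hUC (ε/2) (half_pos hε)
    refine ⟨δ, hδ0, fun x p hxp s hs1 hs2 => ?_⟩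
    exact hδ (s, x) (by simp [Set.mem_Icc.mpr ⟨hs1, hs2⟩]) (s, p)
      (by simp [Set.mem_Icc.mpr ⟨hs1, hs2⟩]) (by
        rw [Prod.dist_eq]
        simp only [dist_self, max_lt_iff]
        exact ⟨hδ0, hxp⟩)
  set δ' := min δ (ε/2) with hδ'def
  have hδ'0 : 0 < δ' := lt_min hδ0 (half_pos hε)
  have hK : IsCompact (closure S) := isClosed_closure.isCompact
  have hcover : closure S ⊆ ⋃ p : S, ball (p : X) δ' := by
    intro q hq
    rw [Metric.mem_closure_iff] at hq
    obtain ⟨p, hp, hpq⟩ := hq δ' hδ'0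
    exact Set.mem_iUnion.mpr ⟨⟨p, hp⟩, by simpa [mem_ball] using hpq⟩
  obtain ⟨F, hF⟩ := hK.elim_finite_subcover (fun p : S => ball (p : X) δ')
    (fun _ => isOpen_ball) hcover
  have hpair : ∀ p : S, ∃ n m, 1 ≤ n ∧ 1 ≤ m ∧
      Chain2 Φ (ε/2) T (p : X) z n ∧ Chain2 Φ (ε/2) T z (p : X) m := by
    rintro ⟨p, hp⟩
    obtain ⟨n1, u1, t1, hn1, hu10, hu1n, -, ht1, hd1⟩ :=
      hS p hp z hz (ε/2) T (half_pos hε) hT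
    obtain ⟨n2, u2, t2, hn2, hu20, hu2n, -, ht2, hd2⟩ :=
      hS z hz p hp (ε/2) T (half_pos hε) hT
    obtain ⟨m1, hm1, hc1⟩ := chain2_of_chain Φ hΦ (half_pos hε) hT u1 t1 hn1 hu10 hu1n ht1 hd1
    obtain ⟨m2, hm2, hc2⟩ := chain2_of_chain Φ hΦ (half_pos hε) hT u2 t2 hn2 hu20 hu2n ht2 hd2
    exact ⟨m1, m2, hm1, hm2, hc1, hc2⟩
  choose g1 g2 hg1 hg2 hc1 hc2 using hpair
  set N : ℕ := F.sup g1 + F.sup g2 with hNdef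
  refine ⟨2 * T * N + 1, by positivity, fun x hx y hy => ?_⟩
  have hxF : ∃ p ∈ F, x ∈ ball (p : X) δ' := by
    have := hF (subset_closure hx)
    simpa using this
  have hyF : ∃ p ∈ F, y ∈ ball (p : X) δ' := by
    have := hF (subset_closure hy)
    simpa using this
  obtain ⟨p, hpF, hxp⟩ := hxF
  obtain ⟨q, hqF, hyq⟩ := hyF
  have hA : Chain2 Φ ε T x z (g1 p) :=
    chain2_start Φ hε (hg1 p) (hc1 p) (fun s hs1 hs2 =>
      hδ x p (lt_of_lt_of_le (mem_ball.mp hxp) (min_le_left _ _)) s hs1 hs2)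
  have hB : Chain2 Φ ε T z y (g2 q) :=
    chain2_end Φ hε (hg2 q) (hc2 q) (by
      rw [dist_comm]
      exact lt_of_lt_of_le (mem_ball.mp hyq) (min_le_right _ _))
  have hC : Chain2 Φ ε T x y (g1 p + g2 q) := chain2_trans Φ (hg1 p) hA hB
  obtain ⟨u, t, hu0, hun, ht, hd⟩ := hC
  have hle : g1 p + g2 q ≤ N := by
    rw [hNdef]
    exact Nat.add_le_add (Finset.le_sup hpF) (Finset.le_sup hqF)
  refine ⟨g1 p + g2 q, u, t, by have := hg1 p; omega, hu0, hun,
    fun i hi => (ht i hi).1, hd, ?_⟩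
  calc ∑ i ∈ Finset.range (g1 p + g2 q), t i
      ≤ ∑ _i ∈ Finset.range (g1 p + g2 q), (2*T) :=
        Finset.sum_le_sum (fun i hi => (ht i (Finset.mem_range.mp hi)).2)
    _ = (g1 p + g2 q : ℕ) * (2*T) := by
        rw [Finset.sum_const, Finset.card_range, nsmul_eq_mul]
    _ ≤ (N : ℝ) * (2*T) := by
        have : ((g1 p + g2 q : ℕ) : ℝ) ≤ (N : ℝ) := by exact_mod_cast hle
        nlinarith
    _ ≤ 2 * T * N + 1 := by nlinarith
end
end
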